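/- Let M(a), M(b), M(ab), M(ba) be 2×2 real matrices with strictly positive entries, all entries drawn from a fixed finite set of positive reals q(u), u ∈ Σ. Set δ = min over the four matrices of (min entry)/(max entry) and assume K is the maximum over matrices M, row pairs (i,j) of max_k M_{ik}/M_{jk} − min_k M_{ik}/M_{jk}. Then 0 < δ < 1 implies: for any sequence x_1, x_2, … of symbols and any k ∈ {1,2}, the ratios M(x_1)⋯M(x_n)_{2k} / M(x_1)⋯M(x_n)_{1k} converge as n → ∞ to a limit c independent of k, with |M(x_1)⋯M(x_n)_{2k}/M(x_1)⋯M(x_n)_{1k} − c| ≤ K(1−δ^2)^{n−1}. -/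

import Mathlib

open Filter Topology
lemma inf2' (f : Fin 2 → ℝ) : ⨅ i, f i = min (f 0) (f 1) := by
  apply le_antisymm
  · exact le_min (ciInf_le (Set.finite_range f).bddBelow 0)
      (ciInf_le (Set.finite_range f).bddBelow 1)
  · refine le_ciInf fun i => ?_
    fin_cases i
    · exact min_le_left _ _
    · exact min_le_right _ _

lemma sup2' (f : Fin 2 → ℝ) : ⨆ i, f i = max (f 0) (f 1) := by
  apply le_antisymm
  · refine ciSup_le fun i => ?_
    fin_cases i
    · exact le_max_left _ _
    · exact le_max_right _ _
  · exact max_le (le_ciSup (Set.finite_range f).bddAbove 0)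
      (le_ciSup (Set.finite_range f).bddAbove 1)

lemma mediant' (a b c d e f : ℝ) (hc : 0 < c) (hd : 0 < d) (he : 0 < e) (hf : 0 < f) :
    min (a/c) (b/d) ≤ (a*e+b*f)/(c*e+d*f) ∧ (a*e+b*f)/(c*e+d*f) ≤ max (a/c) (b/d) := by
  have hD : 0 < c*e+d*f := by positivity
  rcases le_total (a/c) (b/d) with h | h
  · have had : a*d ≤ b*c := by
      rw [div_le_div_iff₀ hc hd] at h; linarith
    constructor
    · rw [min_eq_left h, div_le_div_iff₀ hc hD]; nlinarith
    · rw [max_eq_right h, div_le_div_iff₀ hD hd]; nlinarith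
  · have had : b*c ≤ a*d := by
      rw [div_le_div_iff₀ hd hc] at h; linarith
    constructor
    · rw [min_eq_right h, div_le_div_iff₀ hd hD]; nlinarith
    · rw [max_eq_left h, div_le_div_iff₀ hD hc]; nlinarith

set_option maxHeartbeats 1000000 in

lemma contract' (a b c d n00 n01 n10 n11 m L δ : ℝ)
    (hc : 0 < c) (hd : 0 < d) (hm : 0 < m)
    (h00 : m ≤ n00) (h00' : n00 ≤ L) (h01 : m ≤ n01) (h01' : n01 ≤ L)
    (h10 : m ≤ n10) (h10' : n10 ≤ L) (h11 : m ≤ n11) (h11' : n11 ≤ L)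
    (hδm : δ ≤ m / L) (hδ0 : 0 < δ) (hδ1 : δ ≤ 1) :
    |(a*n00+b*n10)/(c*n00+d*n10) - (a*n01+b*n11)/(c*n01+d*n11)|
      ≤ (1 - δ^2) * |a/c - b/d| := by
  have hL : 0 < L := hm.trans_le (h00.trans h00')
  have hδL : δ * L ≤ m := by
    rw [le_div_iff₀ hL] at hδm; exact hδm
  have hδ2 : δ^2 * L^2 ≤ m^2 := by nlinarith [mul_self_le_mul_self (by positivity : (0:ℝ) ≤ δ*L) hδL]
  have hn00 : 0 < n00 := hm.trans_le h00
  have hn01 : 0 < n01 := hm.trans_le h01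
  have hn10 : 0 < n10 := hm.trans_le h10
  have hn11 : 0 < n11 := hm.trans_le h11
  have hpm : m^2 ≤ n00*n11 := by nlinarith
  have hqm : m^2 ≤ n01*n10 := by nlinarith
  have hpL : n00*n11 ≤ L^2 := by nlinarith
  have hqL : n01*n10 ≤ L^2 := by nlinarith
  have hkey : |n00*n11 - n01*n10| ≤ (1 - δ^2) * (n00*n11 + n01*n10) := by
    rw [abs_le]
    constructor <;> nlinarith
  have hD0p : 0 < c*n00 + d*n10 := by positivity
  have hD1p : 0 < c*n01 + d*n11 := by positivity
  have hDD : c*d*(n00*n11 + n01*n10) ≤ (c*n00 + d*n10) * (c*n01 + d*n11) := by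
    have expand : (c*n00 + d*n10) * (c*n01 + d*n11)
        = c*c*(n00*n01) + d*d*(n10*n11) + c*d*(n00*n11 + n01*n10) := by ring
    have h1 : 0 < c*c*(n00*n01) := by positivity
    have h2 : 0 < d*d*(n10*n11) := by positivity
    linarith
  have hδ2' : 0 ≤ 1 - δ^2 := by nlinarith
  have key2 : c*d*|n00*n11 - n01*n10| ≤ (1 - δ^2) * ((c*n00 + d*n10) * (c*n01 + d*n11)) := by
    calc c*d*|n00*n11 - n01*n10| ≤ c*d*((1-δ^2)*(n00*n11 + n01*n10)) :=
          mul_le_mul_of_nonneg_left hkey (by positivity)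
      _ = (1-δ^2) * (c*d*(n00*n11 + n01*n10)) := by ring
      _ ≤ (1-δ^2) * ((c*n00 + d*n10) * (c*n01 + d*n11)) := mul_le_mul_of_nonneg_left hDD hδ2'
  have eq1 : (a*n00+b*n10)/(c*n00 + d*n10) - (a*n01+b*n11)/(c*n01 + d*n11)
      = ((a*d-b*c)*(n00*n11 - n01*n10))/((c*n00 + d*n10) * (c*n01 + d*n11)) := by
    field_simp
    ring
  have eq2 : a/c - b/d = (a*d-b*c)/(c*d) := by
    field_simp
  rw [eq1, eq2, abs_div, abs_div, abs_mul, mul_div_assoc',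
    abs_of_pos (by positivity : (0:ℝ) < (c*n00 + d*n10) * (c*n01 + d*n11)),
    abs_of_pos (by positivity : (0:ℝ) < c*d),
    div_le_div_iff₀ (by positivity) (by positivity)]
  have h3 := mul_le_mul_of_nonneg_left key2 (abs_nonneg (a*d-b*c))
  nlinarith [h3]

theorem stmt_13 {A : Type*} [Fintype A] [Nonempty A]
    (M : A → Matrix (Fin 2) (Fin 2) ℝ)
    (hpos : ∀ u i j, 0 < M u i j)
    (δ K : ℝ)
    (hδ : δ = ⨅ u : A, (⨅ i, ⨅ j, M u i j) / (⨆ i, ⨆ j, M u i j))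
    (hK : K = ⨆ u : A, ⨆ i, ⨆ j,
      ((⨆ k, M u i k / M u j k) - ⨅ k, M u i k / M u j k))
    (hδ0 : 0 < δ) (hδ1 : δ < 1)
    (x : ℕ → A) :
    ∃ c : ℝ, ∀ k : Fin 2,
      Tendsto (fun n : ℕ =>
          (((List.range n).map (fun i => M (x i))).prod 1 k) /
          (((List.range n).map (fun i => M (x i))).prod 0 k))
        atTop (𝓝 c) ∧
      ∀ n : ℕ, 1 ≤ n →
        |(((List.range n).map (fun i => M (x i))).prod 1 k) /
          (((List.range n).map (fun i => M (x i))).prod 0 k) - c|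
          ≤ K * (1 - δ^2)^(n-1) := by
  obtain ⟨P, hP⟩ : ∃ P : ℕ → Matrix (Fin 2) (Fin 2) ℝ,
      ∀ n, P n = ((List.range n).map (fun i => M (x i))).prod := ⟨_, fun _ => rfl⟩
  have Psucc : ∀ n, P (n+1) = P n * M (x n) := by
    intro n
    rw [hP, hP, List.range_succ]
    simp
  have P1 : P 1 = M (x 0) := by
    rw [hP]
    simp [List.range_succ]
  have Ppos : ∀ n i j, 0 < P (n+1) i j := by
    intro n
    induction n with
    | zero => intro i j; rw [P1]; exact hpos _ i j
    | succ n ih =>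
      intro i j
      rw [Psucc, Matrix.mul_apply, Fin.sum_univ_two]
      exact add_pos (mul_pos (ih i 0) (hpos _ 0 j)) (mul_pos (ih i 1) (hpos _ 1 j))
  have entry : ∀ n i k, P (n+1+1) i k
      = P (n+1) i 0 * M (x (n+1)) 0 k + P (n+1) i 1 * M (x (n+1)) 1 k := by
    intro n i k
    rw [Psucc, Matrix.mul_apply, Fin.sum_univ_two]
  -- δ facts
  have hδu : ∀ u : A, ∃ m L : ℝ, 0 < m ∧ (∀ i j, m ≤ M u i j ∧ M u i j ≤ L) ∧ δ ≤ m / L := by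
    intro u
    refine ⟨min (min (M u 0 0) (M u 0 1)) (min (M u 1 0) (M u 1 1)),
      max (max (M u 0 0) (M u 0 1)) (max (M u 1 0) (M u 1 1)), ?_, ?_, ?_⟩
    · exact lt_min (lt_min (hpos u 0 0) (hpos u 0 1)) (lt_min (hpos u 1 0) (hpos u 1 1))
    · intro i j
      fin_cases i <;> fin_cases j <;>
        exact ⟨by simp [min_le_iff, le_refl], by simp [le_max_iff, le_refl]⟩
    · rw [hδ]
      have h1 : (⨅ u : A, (⨅ i, ⨅ j, M u i j) / (⨆ i, ⨆ j, M u i j))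
          ≤ (⨅ i, ⨅ j, M u i j) / (⨆ i, ⨆ j, M u i j) :=
        ciInf_le (Set.finite_range _).bddBelow u
      calc (⨅ u : A, (⨅ i, ⨅ j, M u i j) / (⨆ i, ⨆ j, M u i j))
          ≤ (⨅ i, ⨅ j, M u i j) / (⨆ i, ⨆ j, M u i j) := h1
        _ = _ := by simp only [inf2', sup2']
  -- K fact
  have hK0 : ∀ u : A, (⨆ k, M u 1 k / M u 0 k) - (⨅ k, M u 1 k / M u 0 k) ≤ K := by
    intro u
    rw [hK]
    calc (⨆ k, M u 1 k / M u 0 k) - (⨅ k, M u 1 k / M u 0 k)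
        ≤ ⨆ j : Fin 2, ((⨆ k, M u 1 k / M u j k) - ⨅ k, M u 1 k / M u j k) :=
          le_ciSup (f := fun j : Fin 2 => (⨆ k, M u 1 k / M u j k) - ⨅ k, M u 1 k / M u j k)
            (Set.finite_range _).bddAbove 0
      _ ≤ ⨆ i : Fin 2, ⨆ j : Fin 2, ((⨆ k, M u i k / M u j k) - ⨅ k, M u i k / M u j k) :=
          le_ciSup (f := fun i : Fin 2 =>
              ⨆ j : Fin 2, ((⨆ k, M u i k / M u j k) - ⨅ k, M u i k / M u j k))
            (Set.finite_range _).bddAbove 1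
      _ ≤ _ := le_ciSup (f := fun u : A =>
              ⨆ i, ⨆ j, ((⨆ k, M u i k / M u j k) - ⨅ k, M u i k / M u j k))
            (Set.finite_range _).bddAbove u
  -- ratios
  obtain ⟨r, hr⟩ : ∃ r : ℕ → Fin 2 → ℝ,
      ∀ n k, r n k = P (n+1) 1 k / P (n+1) 0 k := ⟨_, fun _ _ => rfl⟩
  obtain ⟨lo, hlo⟩ : ∃ lo : ℕ → ℝ, ∀ n, lo n = min (r n 0) (r n 1) := ⟨_, fun _ => rfl⟩
  obtain ⟨hi, hhi⟩ : ∃ hi : ℕ → ℝ, ∀ n, hi n = max (r n 0) (r n 1) := ⟨_, fun _ => rfl⟩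
  have hδ1' : δ ≤ 1 := hδ1.le
  have hδsq : (0:ℝ) ≤ 1 - δ^2 := by nlinarith
  -- the inductive step
  have step : ∀ n, (∀ k, lo n ≤ r (n+1) k ∧ r (n+1) k ≤ hi n) ∧
      |r (n+1) 0 - r (n+1) 1| ≤ (1-δ^2) * |r n 0 - r n 1| := by
    intro n
    obtain ⟨m, L, hm, hmL, hdm⟩ := hδu (x (n+1))
    have ha := Ppos n 1 0
    have hb := Ppos n 1 1
    have hc := Ppos n 0 0
    have hd := Ppos n 0 1
    constructor
    · intro k
      rw [hlo, hhi, hr n 0, hr n 1, hr (n+1) k, entry, entry]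
      exact mediant' (P (n+1) 1 0) (P (n+1) 1 1) (P (n+1) 0 0) (P (n+1) 0 1)
        (M (x (n+1)) 0 k) (M (x (n+1)) 1 k) hc hd (hpos _ 0 k) (hpos _ 1 k)
    · rw [hr (n+1) 0, hr (n+1) 1, hr n 0, hr n 1, entry, entry, entry, entry]
      exact contract' (P (n+1) 1 0) (P (n+1) 1 1) (P (n+1) 0 0) (P (n+1) 0 1)
        (M (x (n+1)) 0 0) (M (x (n+1)) 0 1) (M (x (n+1)) 1 0) (M (x (n+1)) 1 1)
        m L δ hc hd hm
        (hmL 0 0).1 (hmL 0 0).2 (hmL 0 1).1 (hmL 0 1).2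
        (hmL 1 0).1 (hmL 1 0).2 (hmL 1 1).1 (hmL 1 1).2
        hdm hδ0 hδ1'
  have mono_lo : Monotone lo := monotone_nat_of_le_succ fun n => by
    rw [hlo (n+1)]
    exact le_min ((step n).1 0).1 ((step n).1 1).1
  have anti_hi : Antitone hi := antitone_nat_of_succ_le fun n => by
    rw [hhi (n+1)]
    exact max_le ((step n).1 0).2 ((step n).1 1).2
  have lo_le_hi : ∀ n, lo n ≤ hi n := fun n => by
    rw [hlo, hhi]; exact min_le_max
  -- initial oscillation bound
  have hKu : |r 0 0 - r 0 1| ≤ K := by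
    have h := hK0 (x 0)
    rw [sup2', inf2', max_sub_min_eq_abs, abs_sub_comm] at h
    rw [hr, hr, P1]
    exact h
  have gap : ∀ n, |r n 0 - r n 1| ≤ K * (1-δ^2)^n := by
    intro n
    induction n with
    | zero => simpa using hKu
    | succ n ih =>
      calc |r (n+1) 0 - r (n+1) 1| ≤ (1-δ^2) * |r n 0 - r n 1| := (step n).2
        _ ≤ (1-δ^2) * (K * (1-δ^2)^n) := mul_le_mul_of_nonneg_left ih hδsq
        _ = K * (1-δ^2)^(n+1) := by ring
  have bddA : BddAbove (Set.range lo) := by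
    refine ⟨hi 0, ?_⟩
    rintro _ ⟨n, rfl⟩
    exact (lo_le_hi n).trans (anti_hi (Nat.zero_le n))
  refine ⟨⨆ n, lo n, ?_⟩
  set c := ⨆ n, lo n with hc
  have hlc : ∀ n, lo n ≤ c := fun n => le_ciSup bddA n
  have hch : ∀ n, c ≤ hi n := fun n => ciSup_le fun m => by
    rcases le_total m n with h | h
    · exact (mono_lo h).trans (lo_le_hi n)
    · exact (lo_le_hi m).trans (anti_hi h)
  have rbound : ∀ n (k : Fin 2), lo n ≤ r n k ∧ r n k ≤ hi n := by
    intro n k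
    rw [hlo, hhi]
    fin_cases k
    · exact ⟨min_le_left _ _, le_max_left _ _⟩
    · exact ⟨min_le_right _ _, le_max_right _ _⟩
  have key : ∀ n (k : Fin 2), |r n k - c| ≤ K * (1-δ^2)^n := by
    intro n k
    have h1 := (rbound n k).1
    have h2 := (rbound n k).2
    have h3 := hlc n
    have h4 := hch n
    have hg : hi n - lo n = |r n 0 - r n 1| := by
      rw [hlo, hhi, max_sub_min_eq_abs, abs_sub_comm]
    have h5 : hi n - lo n ≤ K * (1-δ^2)^n := hg ▸ gap n
    rw [abs_le]
    constructor <;> linarith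
  have hpow : Tendsto (fun n : ℕ => K * (1-δ^2)^n) atTop (𝓝 0) := by
    have h := tendsto_pow_atTop_nhds_zero_of_lt_one hδsq (by nlinarith)
    simpa using h.const_mul K
  have hFr : ∀ (k : Fin 2) (n : ℕ),
      (((List.range (n+1)).map (fun i => M (x i))).prod 1 k) /
      (((List.range (n+1)).map (fun i => M (x i))).prod 0 k) = r n k := by
    intro k n
    rw [hr, hP]
  intro k
  constructor
  · have h1 : Tendsto (fun n => r n k) atTop (𝓝 c) := by
      rw [tendsto_iff_dist_tendsto_zero]
      exact squeeze_zero (fun n => dist_nonneg)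
        (fun n => by rw [Real.dist_eq]; exact key n k) hpow
    apply (tendsto_add_atTop_iff_nat 1).mp
    simp only [hFr]
    exact h1
  · intro n hn
    obtain ⟨m, rfl⟩ : ∃ m, n = m + 1 := ⟨n-1, by omega⟩
    rw [hFr, Nat.add_sub_cancel]
    exact key m k
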